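/- Let A, Q be n×n real matrices and B₀, Δ_B n×m real matrices; let R be an m×m real matrix. Assume: Q and R are symmetric positive definite with Q − q·I_n ⪰ 0 and R − r·I_m ⪰ 0 for reals q, r > 0; ‖Δ_B‖ ≤ ε for a real ε ≥ 0; P₀ is a symmetric positive definite n×n matrix satisfying Aᵀ P₀ + P₀ A + Q − P₀ B₀ R⁻¹ B₀ᵀ P₀ = 0; K₀ := −R⁻¹ B₀ᵀ P₀; and W₀ is a symmetric positive semidefinite n×n matrix satisfying (A + B₀ K₀) W₀ + W₀ (A + B₀ K₀)ᵀ + I_n = 0. Then ‖Δ_B K₀ W₀ + W₀ K₀ᵀ Δ_Bᵀ‖ ≤ 2ε·tr(P₀)/√(q·r). -/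

import Mathlib

open Matrix
open scoped Matrix.Norms.L2Operator

variable {a b : ℕ}

open scoped MatrixOrder in
lemma psd_decomp {M : Matrix (Fin a) (Fin a) ℝ} (hM : M.PosSemidef) :
    ∃ B : Matrix (Fin a) (Fin a) ℝ, M = Bᴴ * B :=
  ⟨CFC.sqrt M, by rw [(CFC.sqrt_nonneg M).posSemidef.1.eq, CFC.sqrt_mul_sqrt_self M hM.nonneg]⟩

lemma psd_trace_nonneg {M : Matrix (Fin a) (Fin a) ℝ} (hM : M.PosSemidef) :
    0 ≤ M.trace := by
  have h : ∀ i, 0 ≤ M i i := fun i => by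
    have := hM.dotProduct_mulVec_nonneg (Pi.single i 1)
    simpa [dotProduct, mulVec, Pi.single_apply] using this
  exact Finset.sum_nonneg fun i _ => h i

lemma trace_mul_psd_nonneg {M N : Matrix (Fin a) (Fin a) ℝ}
    (hM : M.PosSemidef) (hN : N.PosSemidef) : 0 ≤ (M * N).trace := by
  obtain ⟨B, hB⟩ := psd_decomp hM
  have h : (M * N).trace = (B * N * Bᴴ).trace := by
    rw [hB, Matrix.mul_assoc, Matrix.trace_mul_comm, Matrix.mul_assoc]
  rw [h]
  exact psd_trace_nonneg (hN.mul_mul_conjTranspose_same B)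

lemma opnorm_le_sqrt_trace (B : Matrix (Fin a) (Fin b) ℝ) :
    ‖B‖ ≤ Real.sqrt ((Bᴴ * B).trace) := by
  rw [Matrix.l2_opNorm_def]
  refine ContinuousLinearMap.opNorm_le_bound _ (Real.sqrt_nonneg _) fun x => ?_
  set x' : (Fin b) → ℝ := (WithLp.equiv 2 _) x with hx'
  have happ : (LinearEquiv.trans (toEuclideanLin) (LinearMap.toContinuousLinearMap)
      (B : Matrix (Fin a) (Fin b) ℝ)) x
      = (WithLp.equiv 2 ((Fin a) → ℝ)).symm (B *ᵥ x') := rfl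
  rw [happ]
  have hnormx : ‖x‖ = Real.sqrt (∑ j, (x' j)^2) := by
    rw [EuclideanSpace.norm_eq]
    congr 1
    refine Finset.sum_congr rfl fun j _ => ?_
    rw [Real.norm_eq_abs, sq_abs]
    rfl
  have hnormBx : ‖(WithLp.equiv 2 ((Fin a) → ℝ)).symm (B *ᵥ x')‖
      = Real.sqrt (∑ i, ((B *ᵥ x') i)^2) := by
    rw [EuclideanSpace.norm_eq]
    congr 1
    refine Finset.sum_congr rfl fun i _ => ?_
    rw [Real.norm_eq_abs, sq_abs]
    rfl
  rw [hnormBx, hnormx, ← Real.sqrt_mul (psd_trace_nonneg (posSemidef_conjTranspose_mul_self B))]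
  apply Real.sqrt_le_sqrt
  have htr : (Bᴴ * B).trace = ∑ j, ∑ i, (B i j)^2 := by
    simp [Matrix.trace, Matrix.diag, Matrix.mul_apply, Matrix.conjTranspose_apply, sq]
  rw [htr, Finset.sum_mul]
  have hrow : ∀ i, ((B *ᵥ x') i)^2 ≤ (∑ j, (B i j)^2) * (∑ j, (x' j)^2) := fun i => by
    simpa [Matrix.mulVec, dotProduct] using
      Finset.sum_mul_sq_le_sq_mul_sq Finset.univ (fun j => B i j) (fun j => x' j)
  calc ∑ i, ((B *ᵥ x') i)^2 ≤ ∑ i, (∑ j, (B i j)^2) * (∑ j, (x' j)^2) :=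
        Finset.sum_le_sum fun i _ => hrow i
    _ = ∑ j, (∑ i, (B i j)^2) * (∑ j, (x' j)^2) := by
        rw [← Finset.sum_mul, ← Finset.sum_mul, Finset.sum_comm]

lemma psd_opnorm_le_trace {M : Matrix (Fin a) (Fin a) ℝ} (hM : M.PosSemidef) :
    ‖M‖ ≤ M.trace := by
  obtain ⟨B, hB⟩ := psd_decomp hM
  calc ‖M‖ = ‖B‖ * ‖B‖ := by rw [hB, Matrix.l2_opNorm_conjTranspose_mul_self]
    _ ≤ Real.sqrt ((Bᴴ * B).trace) * Real.sqrt ((Bᴴ * B).trace) :=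
        mul_le_mul (opnorm_le_sqrt_trace B) (opnorm_le_sqrt_trace B) (norm_nonneg B)
          (Real.sqrt_nonneg _)
    _ = M.trace := by
        rw [Real.mul_self_sqrt (psd_trace_nonneg (hB ▸ hM)), hB]

lemma opnorm_mul_self_conjTranspose (X : Matrix (Fin a) (Fin b) ℝ) :
    ‖X * Xᴴ‖ = ‖X‖ * ‖X‖ := by
  calc ‖X * Xᴴ‖ = ‖(Xᴴ)ᴴ * Xᴴ‖ := by rw [Matrix.conjTranspose_conjTranspose]
    _ = ‖Xᴴ‖ * ‖Xᴴ‖ := Matrix.l2_opNorm_conjTranspose_mul_self Xᴴ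
    _ = ‖X‖ * ‖X‖ := by rw [Matrix.l2_opNorm_conjTranspose]

open scoped MatrixOrder in
lemma opnorm_KW_le {K : Matrix (Fin b) (Fin a) ℝ} {W : Matrix (Fin a) (Fin a) ℝ}
    (hW : W.PosSemidef) :
    ‖K * W‖ ≤ Real.sqrt ‖K * W * Kᴴ‖ * Real.sqrt ‖W‖ := by
  obtain ⟨S, hSpsd, hSherm, hSS⟩ : ∃ S : Matrix (Fin a) (Fin a) ℝ,
      S.PosSemidef ∧ Sᴴ = S ∧ S * S = W :=
    ⟨CFC.sqrt W, (CFC.sqrt_nonneg W).posSemidef, (CFC.sqrt_nonneg W).posSemidef.1,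
      CFC.sqrt_mul_sqrt_self W hW.nonneg⟩
  have h1 : ‖K * S‖ * ‖K * S‖ = ‖K * W * Kᴴ‖ := by
    rw [← opnorm_mul_self_conjTranspose (K * S), Matrix.conjTranspose_mul, hSherm,
      Matrix.mul_assoc K S (S * Kᴴ), ← Matrix.mul_assoc S S Kᴴ, hSS, ← Matrix.mul_assoc]
  have h2 : ‖S‖ * ‖S‖ = ‖W‖ := by
    have h := Matrix.l2_opNorm_conjTranspose_mul_self S
    rw [hSherm, hSS] at h
    exact h.symm
  have h3 : ‖K * W‖ ≤ ‖K * S‖ * ‖S‖ := by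
    rw [← hSS, ← Matrix.mul_assoc]
    exact Matrix.l2_opNorm_mul (K * S) S
  have h4 : ‖K * S‖ = Real.sqrt ‖K * W * Kᴴ‖ := by
    rw [← h1, Real.sqrt_mul_self (norm_nonneg _)]
  have h5 : ‖S‖ = Real.sqrt ‖W‖ := by rw [← h2, Real.sqrt_mul_self (norm_nonneg _)]
  rw [← h4, ← h5]; exact h3


/-- Perturbation bound in the proof of Proposition 1:
`‖Δ_B K₀ W₀ + W₀ K₀ᵀ Δ_Bᵀ‖ ≤ 2 ε tr(P₀)/√(q r)`. -/
theorem perturbation_term_norm_bound {n m : ℕ}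
    (A Q : Matrix (Fin n) (Fin n) ℝ)
    (B₀ ΔB : Matrix (Fin n) (Fin m) ℝ)
    (R : Matrix (Fin m) (Fin m) ℝ)
    (q r : ℝ) (hq : 0 < q) (hr : 0 < r)
    (hQ : Q.PosDef) (hR : R.PosDef)
    (hQq : (Q - q • (1 : Matrix (Fin n) (Fin n) ℝ)).PosSemidef)
    (hRr : (R - r • (1 : Matrix (Fin m) (Fin m) ℝ)).PosSemidef)
    (ε : ℝ) (hε : 0 ≤ ε) (hΔB : ‖ΔB‖ ≤ ε)
    (P₀ : Matrix (Fin n) (Fin n) ℝ) (hP₀ : P₀.PosDef)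
    (hARE : Aᵀ * P₀ + P₀ * A + Q - P₀ * B₀ * R⁻¹ * B₀ᵀ * P₀ = 0)
    (K₀ : Matrix (Fin m) (Fin n) ℝ) (hK₀ : K₀ = -(R⁻¹ * B₀ᵀ * P₀))
    (W₀ : Matrix (Fin n) (Fin n) ℝ) (hW₀psd : W₀.PosSemidef)
    (hW₀ : (A + B₀ * K₀) * W₀ + W₀ * (A + B₀ * K₀)ᵀ + 1 = 0) :
    ‖ΔB * K₀ * W₀ + W₀ * K₀ᵀ * ΔBᵀ‖ ≤ 2 * ε * P₀.trace / Real.sqrt (q * r) := by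
  -- basic symmetry facts
  have hPt : P₀ᵀ = P₀ := by
    rw [← Matrix.conjTranspose_eq_transpose_of_trivial]; exact hP₀.1
  have hRt : Rᵀ = R := by
    rw [← Matrix.conjTranspose_eq_transpose_of_trivial]; exact hR.1
  have hRdet : IsUnit R.det := isUnit_iff_ne_zero.mpr hR.det_pos.ne'
  have hRinvt : R⁻¹ᵀ = R⁻¹ := by rw [Matrix.transpose_nonsing_inv, hRt]
  have hRinvR : R⁻¹ * R = 1 := Matrix.nonsing_inv_mul R hRdet
  set G : Matrix (Fin n) (Fin n) ℝ := P₀ * B₀ * R⁻¹ * B₀ᵀ * P₀ with hG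
  set Ac : Matrix (Fin n) (Fin n) ℝ := A + B₀ * K₀ with hAc
  -- transpose of K₀
  have hKt : K₀ᵀ = -(P₀ * B₀ * R⁻¹) := by
    rw [hK₀, Matrix.transpose_neg, Matrix.transpose_mul, Matrix.transpose_mul,
      Matrix.transpose_transpose, hRinvt, hPt, Matrix.mul_assoc]
  -- K₀ᵀ R K₀ = G
  have hKRK : K₀ᵀ * R * K₀ = G := by
    rw [hKt, hK₀, hG]
    simp only [Matrix.neg_mul, Matrix.mul_neg, neg_neg]
    calc P₀ * B₀ * R⁻¹ * R * (R⁻¹ * B₀ᵀ * P₀)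
        = P₀ * B₀ * ((R⁻¹ * R) * R⁻¹) * (B₀ᵀ * P₀) := by
          simp only [Matrix.mul_assoc]
      _ = P₀ * B₀ * R⁻¹ * B₀ᵀ * P₀ := by
          rw [hRinvR, Matrix.one_mul]; simp only [Matrix.mul_assoc]
  have hPBK : P₀ * (B₀ * K₀) = -G := by
    rw [hK₀, hG]
    simp only [Matrix.mul_neg, neg_inj, Matrix.mul_assoc]
  have hKBP : (B₀ * K₀)ᵀ * P₀ = -G := by
    rw [Matrix.transpose_mul, hKt, hG]
    simp only [Matrix.neg_mul, neg_inj, Matrix.mul_assoc]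
  -- closed-loop Lyapunov identity for P₀
  have hkey : P₀ * Ac + Acᵀ * P₀ = -(Q + K₀ᵀ * R * K₀) := by
    have h2 : Aᵀ * P₀ + P₀ * A + Q = G := sub_eq_zero.mp hARE
    rw [hAc, Matrix.transpose_add, Matrix.mul_add, Matrix.add_mul, hPBK, hKBP, hKRK]
    have h3 : P₀ * A + -G + (Aᵀ * P₀ + -G) = (Aᵀ * P₀ + P₀ * A + Q) - 2 • G - Q := by
      abel
    rw [h3, h2]
    abel
  -- Lyapunov for W₀
  have hAcW : Ac * W₀ + W₀ * Acᵀ = -1 := by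
    rw [hAc]
    exact eq_neg_of_add_eq_zero_left hW₀
  -- trace identity: tr((Q + KᵀRK) W₀) = tr P₀
  have htr : ((Q + K₀ᵀ * R * K₀) * W₀).trace = P₀.trace := by
    have h1 : ((P₀ * Ac + Acᵀ * P₀) * W₀).trace = -P₀.trace := by
      calc ((P₀ * Ac + Acᵀ * P₀) * W₀).trace
          = (P₀ * Ac * W₀).trace + (Acᵀ * P₀ * W₀).trace := by
            rw [Matrix.add_mul, Matrix.trace_add]
        _ = (P₀ * (Ac * W₀)).trace + (P₀ * (W₀ * Acᵀ)).trace := by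
            rw [Matrix.mul_assoc]
            congr 1
            rw [Matrix.mul_assoc, Matrix.trace_mul_comm, Matrix.mul_assoc]
        _ = (P₀ * (Ac * W₀ + W₀ * Acᵀ)).trace := by
            rw [Matrix.mul_add, Matrix.trace_add]
        _ = (P₀ * (-1)).trace := by rw [hAcW]
        _ = -P₀.trace := by rw [Matrix.mul_neg, Matrix.mul_one, Matrix.trace_neg]
    rw [hkey] at h1
    rw [Matrix.neg_mul, Matrix.trace_neg, neg_inj] at h1
    exact h1
  -- nonnegativity of the two trace pieces
  have hQW₀ : 0 ≤ (Q * W₀).trace := trace_mul_psd_nonneg hQ.posSemidef hW₀psd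
  have hKRKpsd : (K₀ᵀ * R * K₀).PosSemidef := by
    have h := hR.posSemidef.conjTranspose_mul_mul_same K₀
    rwa [Matrix.conjTranspose_eq_transpose_of_trivial] at h
  have hKRKW₀ : 0 ≤ ((K₀ᵀ * R * K₀) * W₀).trace := trace_mul_psd_nonneg hKRKpsd hW₀psd
  have hsplit : (Q * W₀).trace + ((K₀ᵀ * R * K₀) * W₀).trace = P₀.trace := by
    rw [← Matrix.trace_add, ← Matrix.add_mul, htr]
  -- q · tr W₀ ≤ tr(Q W₀) ≤ tr P₀
  have hqW : q * W₀.trace ≤ (Q * W₀).trace := by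
    have h := trace_mul_psd_nonneg hQq hW₀psd
    rw [Matrix.sub_mul, Matrix.trace_sub, Matrix.smul_mul, Matrix.one_mul,
      Matrix.trace_smul] at h
    simpa using sub_nonneg.mp h
  have hWtrace : W₀.trace ≤ P₀.trace / q := by
    rw [le_div_iff₀ hq]
    calc W₀.trace * q = q * W₀.trace := mul_comm _ _
      _ ≤ (Q * W₀).trace := hqW
      _ ≤ P₀.trace := by linarith
  -- r · tr(K₀ W₀ K₀ᵀ) ≤ tr(KᵀRK W₀) ≤ tr P₀
  have hKWKpsd : (K₀ * W₀ * K₀ᵀ).PosSemidef := by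
    have h := hW₀psd.mul_mul_conjTranspose_same K₀
    rwa [Matrix.conjTranspose_eq_transpose_of_trivial] at h
  have hrK : r * (K₀ * W₀ * K₀ᵀ).trace ≤ ((K₀ᵀ * R * K₀) * W₀).trace := by
    have hpsd : (K₀ᵀ * (R - r • 1) * K₀).PosSemidef := by
      have h2 := hRr.conjTranspose_mul_mul_same K₀
      rwa [Matrix.conjTranspose_eq_transpose_of_trivial] at h2
    have h := trace_mul_psd_nonneg hpsd hW₀psd
    have hexp : K₀ᵀ * (R - r • 1) * K₀ * W₀
        = (K₀ᵀ * R * K₀) * W₀ - r • (K₀ᵀ * K₀ * W₀) := by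
      simp only [Matrix.mul_sub, Matrix.sub_mul, Matrix.mul_smul, Matrix.smul_mul,
        Matrix.mul_one]
    rw [hexp, Matrix.trace_sub, Matrix.trace_smul, sub_nonneg, smul_eq_mul] at h
    have hcyc : (K₀ᵀ * K₀ * W₀).trace = (K₀ * W₀ * K₀ᵀ).trace := by
      rw [Matrix.mul_assoc, Matrix.trace_mul_comm, Matrix.mul_assoc]
    rw [hcyc] at h
    exact h
  have hKWKtrace : (K₀ * W₀ * K₀ᵀ).trace ≤ P₀.trace / r := by
    rw [le_div_iff₀ hr]
    calc (K₀ * W₀ * K₀ᵀ).trace * r = r * (K₀ * W₀ * K₀ᵀ).trace := mul_comm _ _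
      _ ≤ ((K₀ᵀ * R * K₀) * W₀).trace := hrK
      _ ≤ P₀.trace := by linarith
  -- operator norm bounds
  have hWnorm : ‖W₀‖ ≤ P₀.trace / q :=
    le_trans (psd_opnorm_le_trace hW₀psd) hWtrace
  have hKWKnorm : ‖K₀ * W₀ * K₀ᵀ‖ ≤ P₀.trace / r :=
    le_trans (psd_opnorm_le_trace hKWKpsd) hKWKtrace
  have htP : 0 ≤ P₀.trace := psd_trace_nonneg hP₀.posSemidef
  -- bound on ‖K₀ W₀‖
  have hKWnorm : ‖K₀ * W₀‖ ≤ P₀.trace / Real.sqrt (q * r) := by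
    have h1 : ‖K₀ * W₀‖ ≤ Real.sqrt ‖K₀ * W₀ * K₀ᴴ‖ * Real.sqrt ‖W₀‖ :=
      opnorm_KW_le hW₀psd
    rw [Matrix.conjTranspose_eq_transpose_of_trivial] at h1
    have h2 : Real.sqrt ‖K₀ * W₀ * K₀ᵀ‖ * Real.sqrt ‖W₀‖
        ≤ Real.sqrt (P₀.trace / r) * Real.sqrt (P₀.trace / q) :=
      mul_le_mul (Real.sqrt_le_sqrt hKWKnorm) (Real.sqrt_le_sqrt hWnorm)
        (Real.sqrt_nonneg _) (Real.sqrt_nonneg _)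
    have h3 : Real.sqrt (P₀.trace / r) * Real.sqrt (P₀.trace / q)
        = P₀.trace / Real.sqrt (q * r) := by
      rw [← Real.sqrt_mul (by positivity)]
      rw [div_mul_div_comm, Real.sqrt_div (by positivity), Real.sqrt_mul_self htP,
        mul_comm r q]
    rw [h3] at h2
    exact le_trans h1 h2
  -- final combination
  have hWt : W₀ᵀ = W₀ := by
    rw [← Matrix.conjTranspose_eq_transpose_of_trivial]; exact hW₀psd.1
  have hNt : W₀ * K₀ᵀ * ΔBᵀ = (ΔB * K₀ * W₀)ᵀ := by
    rw [Matrix.transpose_mul, Matrix.transpose_mul, hWt, Matrix.mul_assoc]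
  have hTnorm : ‖(ΔB * K₀ * W₀)ᵀ‖ = ‖ΔB * K₀ * W₀‖ := by
    rw [← Matrix.conjTranspose_eq_transpose_of_trivial, Matrix.l2_opNorm_conjTranspose]
  have hmain : ‖ΔB * K₀ * W₀‖ ≤ ε * (P₀.trace / Real.sqrt (q * r)) := by
    calc ‖ΔB * K₀ * W₀‖ = ‖ΔB * (K₀ * W₀)‖ := by rw [Matrix.mul_assoc]
      _ ≤ ‖ΔB‖ * ‖K₀ * W₀‖ := Matrix.l2_opNorm_mul ΔB (K₀ * W₀)
      _ ≤ ε * (P₀.trace / Real.sqrt (q * r)) :=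
          mul_le_mul hΔB hKWnorm (norm_nonneg _) hε
  calc ‖ΔB * K₀ * W₀ + W₀ * K₀ᵀ * ΔBᵀ‖
      ≤ ‖ΔB * K₀ * W₀‖ + ‖W₀ * K₀ᵀ * ΔBᵀ‖ := norm_add_le _ _
    _ = ‖ΔB * K₀ * W₀‖ + ‖ΔB * K₀ * W₀‖ := by rw [hNt, hTnorm]
    _ ≤ ε * (P₀.trace / Real.sqrt (q * r)) + ε * (P₀.trace / Real.sqrt (q * r)) := by
        linarith
    _ = 2 * ε * P₀.trace / Real.sqrt (q * r) := by ring
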